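/- For m ≥ 2, every zero θ of f(z) = z^m - z^{m-1} - ... - z - 1 other than its unique real zero ζ ∈ (2 - 1/2^{m-1}, 2) satisfies |θ| < 1. -/

import Mathlib

private lemma G_hasDeriv (m : ℕ) (t : ℝ) :
    HasDerivAt (fun t : ℝ => t ^ (m + 1) - 2 * t ^ m + 1)
      ((m + 1 : ℝ) * t ^ m - 2 * ((m : ℝ) * t ^ (m - 1))) t := by
  have h1 := hasDerivAt_pow (m + 1) t
  have h2 := (hasDerivAt_pow m t).const_mul (2 : ℝ)
  have := (h1.sub h2).add_const 1
  simpa [Nat.add_sub_cancel] using this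

private lemma G_mono (m : ℕ) (hm : 2 ≤ m) :
    StrictMonoOn (fun t : ℝ => t ^ (m + 1) - 2 * t ^ m + 1)
      (Set.Icc (2 * m / (m + 1) : ℝ) 2) := by
  apply strictMonoOn_of_deriv_pos (convex_Icc _ _)
  · fun_prop
  · intro t ht
    rw [interior_Icc, Set.mem_Ioo] at ht
    rw [(G_hasDeriv m t).deriv]
    have hc0 : (0:ℝ) < 2 * m / (m + 1) := by positivity
    have ht0 : 0 < t := hc0.trans ht.1
    have hpow : 0 < t ^ (m - 1) := pow_pos ht0 _
    have hineq : 2 * (m:ℝ) < (m + 1) * t := by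
      have := ht.1
      rw [div_lt_iff₀ (by positivity)] at this
      linarith
    have hts : t ^ m = t ^ (m - 1) * t := by
      rw [← pow_succ]; congr 1; omega
    rw [hts]; nlinarith [mul_pos hpow (sub_pos.2 hineq)]

private lemma G_anti (m : ℕ) (hm : 2 ≤ m) :
    StrictAntiOn (fun t : ℝ => t ^ (m + 1) - 2 * t ^ m + 1)
      (Set.Icc (1 : ℝ) (2 * m / (m + 1))) := by
  apply strictAntiOn_of_deriv_neg (convex_Icc _ _)
  · fun_prop
  · intro t ht
    rw [interior_Icc, Set.mem_Ioo] at ht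
    rw [(G_hasDeriv m t).deriv]
    have ht0 : (0:ℝ) < t := lt_trans one_pos ht.1
    have hpow : 0 < t ^ (m - 1) := pow_pos ht0 _
    have hineq : ((m:ℝ) + 1) * t < 2 * m := by
      have := ht.2
      rw [lt_div_iff₀ (by positivity)] at this
      linarith
    have hts : t ^ m = t ^ (m - 1) * t := by
      rw [← pow_succ]; congr 1; omega
    rw [hts]; nlinarith [mul_pos hpow (sub_pos.2 hineq)]

theorem stmt_2 (m : ℕ) (hm : 2 ≤ m) (ζ : ℝ)
    (hζ₁ : 2 - 1 / 2 ^ (m - 1) < ζ) (hζ₂ : ζ < 2)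
    (hζ : ζ ^ m - ∑ i ∈ Finset.range m, ζ ^ i = 0)
    (θ : ℂ) (hθ : θ ^ m - ∑ i ∈ Finset.range m, θ ^ i = 0)
    (hne : θ ≠ (ζ : ℂ)) : ‖θ‖ < 1 := by
  by_contra hcon
  push_neg at hcon
  set u : ℝ := ‖θ‖ with hu_def
  have hu1 : 1 ≤ u := hcon
  have hup : (0:ℝ) < u ^ m := pow_pos (lt_of_lt_of_le one_pos hu1) m
  -- θ^m * (2 - θ) = 1
  have hkey : θ ^ m * (2 - θ) = 1 := by
    linear_combination (1 - θ) * hθ - geom_sum_mul θ m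
  -- |θ^m| * |2-θ| = 1
  have habs : u ^ m * ‖2 - θ‖ = 1 := by
    have := congrArg norm hkey
    simpa [norm_mul, norm_pow] using this
  -- u^m ≤ ∑ u^i
  have hSle : u ^ m ≤ ∑ i ∈ Finset.range m, u ^ i := by
    have h1 : θ ^ m = ∑ i ∈ Finset.range m, θ ^ i := by linear_combination hθ
    calc u ^ m = ‖∑ i ∈ Finset.range m, θ ^ i‖ := by
          rw [← norm_pow, ← h1]
      _ ≤ ∑ i ∈ Finset.range m, ‖θ ^ i‖ :=
          norm_sum_le _ _
      _ = ∑ i ∈ Finset.range m, u ^ i := by simp [map_pow, hu_def]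
  -- G u ≤ 0
  have hGle : u ^ (m + 1) - 2 * u ^ m + 1 ≤ 0 := by
    have e1 : u ^ m * (u - 1) ≤ (∑ i ∈ Finset.range m, u ^ i) * (u - 1) :=
      mul_le_mul_of_nonneg_right hSle (by linarith)
    have e2 : (∑ i ∈ Finset.range m, u ^ i) * (u - 1) = u ^ m - 1 := geom_sum_mul u m
    have e3 : u ^ (m + 1) = u ^ m * u := pow_succ u m
    nlinarith
  -- 2 - u ≤ |2 - θ|
  have htri : 2 - u ≤ ‖2 - θ‖ := by
    have : ‖(2:ℂ)‖ ≤ ‖2 - θ‖ + ‖θ‖ := by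
      simpa using norm_add_le (2 - θ) θ
    simpa using this
  -- G u ≥ 0
  have hGge : 0 ≤ u ^ (m + 1) - 2 * u ^ m + 1 := by
    have e1 : u ^ m * (2 - u) ≤ u ^ m * ‖2 - θ‖ :=
      mul_le_mul_of_nonneg_left htri hup.le
    have e3 : u ^ (m + 1) = u ^ m * u := pow_succ u m
    nlinarith
  have hGu : u ^ (m + 1) - 2 * u ^ m + 1 = 0 := le_antisymm hGle hGge
  -- equality in triangle ineq
  have habseq : ‖2 - θ‖ = 2 - u := by
    have e : u ^ m * (2 - u) = u ^ m * ‖2 - θ‖ := by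
      rw [habs]; nlinarith [pow_succ u m]
    exact (mul_left_cancel₀ (ne_of_gt hup) e.symm)
  -- u < 2
  have hu2 : u < 2 := by
    by_contra h2
    push_neg at h2
    have hp : 1 ≤ u ^ m := one_le_pow₀ hu1
    nlinarith [pow_succ u m]
  -- θ is real: θ = u
  have hre : θ.re = u := by
    have hsq := congrArg (· ^ 2) habseq
    rw [Complex.sq_norm, Complex.normSq_apply] at hsq
    have husq : u ^ 2 = θ.re * θ.re + θ.im * θ.im := by
      rw [hu_def, Complex.sq_norm, Complex.normSq_apply]
    simp [Complex.sub_re, Complex.sub_im] at hsq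
    nlinarith
  have him : θ.im = 0 := by
    have husq : u ^ 2 = θ.re * θ.re + θ.im * θ.im := by
      rw [hu_def, Complex.sq_norm, Complex.normSq_apply]
    nlinarith [sq_nonneg θ.im]
  have hθu : θ = (u : ℂ) := by
    apply Complex.ext <;> simp [hre, him]
  -- real equation for u
  have hueq : u ^ m - ∑ i ∈ Finset.range m, u ^ i = 0 := by
    rw [hθu] at hθ
    have : ((u ^ m - ∑ i ∈ Finset.range m, u ^ i : ℝ) : ℂ) = 0 := by
      push_cast
      convert hθ using 2
    exact_mod_cast this
  -- u ≠ 1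
  have hune1 : u ≠ 1 := by
    intro h1
    rw [h1] at hueq
    simp at hueq
    have : (m:ℝ) = 1 := by linarith
    have : m = 1 := by exact_mod_cast this
    omega
  have hu1' : 1 < u := lt_of_le_of_ne hu1 (Ne.symm hune1)
  -- c bounds
  set c : ℝ := 2 * m / (m + 1) with hc_def
  have hc1 : 1 < c := by
    rw [hc_def, lt_div_iff₀ (by positivity)]
    have : (2:ℝ) ≤ (m:ℝ) := by exact_mod_cast hm
    linarith
  have hcu : c < u := by
    by_contra hcu
    push_neg at hcu
    have h1mem : (1:ℝ) ∈ Set.Icc (1:ℝ) c := ⟨le_refl _, hc1.le⟩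
    have humem : u ∈ Set.Icc (1:ℝ) c := ⟨hu1, hcu⟩
    have := G_anti m hm h1mem humem hu1'
    simp only at this
    rw [hGu] at this
    simp at this
    linarith
  have hcζ : c ≤ 2 - 1 / 2 ^ (m - 1) := by
    have hnat : m + 1 ≤ 2 ^ m := Nat.lt_two_pow_self (n := m)
    have hr : (m:ℝ) + 1 ≤ 2 ^ m := by exact_mod_cast hnat
    have h2m : (2:ℝ) ^ m = 2 * 2 ^ (m - 1) := by
      rw [← pow_succ']; congr 1; omega
    have hineq : 1 / (2:ℝ) ^ (m - 1) ≤ 2 / ((m:ℝ) + 1) := by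
      rw [div_le_div_iff₀ (by positivity) (by positivity)]
      nlinarith
    have hceq : c = 2 - 2 / ((m:ℝ) + 1) := by
      rw [hc_def]; field_simp; ring
    rw [hceq]; linarith
  -- G ζ = 0
  have hGζ : ζ ^ (m + 1) - 2 * ζ ^ m + 1 = 0 := by
    linear_combination (ζ - 1) * hζ + geom_sum_mul ζ m
  -- conclude u = ζ
  have humem : u ∈ Set.Icc c 2 := ⟨hcu.le, hu2.le⟩
  have hζmem : ζ ∈ Set.Icc c 2 := ⟨le_trans hcζ hζ₁.le, hζ₂.le⟩
  have huζ : u = ζ := (G_mono m hm).injOn humem hζmem (by show u ^ (m+1) - 2*u^m + 1 = ζ ^ (m+1) - 2*ζ^m + 1; rw [hGu, hGζ])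
  exact hne (by rw [hθu, huζ])
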